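/- Equality case of the anisotropic conformable Picone identity: let α ∈ (0,1], let Ω ⊆ (0,∞)^n be open and connected, let p_k > 1 for k = 1,…,n, and let u, v : Ω → ℝ be continuously differentiable with u ≥ 0 and v > 0 on Ω. If L(u,v)(x) = 0 for every x ∈ Ω, then there exists a constant c ≥ 0 such that u = c·v on Ω. -/

import Mathlib

open Filter Topology Real

section aux

lemma young_aux {s t p : ℝ} (hs : 0 ≤ s) (ht : 0 < t) (hp : 1 < p) (hne : s ≠ t) :
    p * t ^ (p - 1) * s < s ^ p + (p - 1) * t ^ p := by
  set r := s / t with hr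
  have hr0 : 0 ≤ r := div_nonneg hs ht.le
  have hrne : r ≠ 1 := by
    intro h
    apply hne
    field_simp [hr] at h
    rw [hr, div_eq_one_iff_eq ht.ne'] at h; exact h
  have hbern : 1 + p * (r - 1) < (1 + (r - 1)) ^ p := by
    apply one_add_mul_self_lt_rpow_one_add (by linarith) (by intro h; apply hrne; linarith) hp
  rw [show (1 : ℝ) + (r - 1) = r by ring] at hbern
  have hs_eq : s = r * t := by rw [hr, div_mul_cancel₀ s ht.ne']
  have htp : (0:ℝ) < t ^ p := rpow_pos_of_pos ht p
  have h1 : s ^ p = r ^ p * t ^ p := by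
    rw [hs_eq, mul_rpow hr0 ht.le]
  have h2 : t ^ (p - 1) * s = r * t ^ p := by
    rw [hs_eq, show t ^ (p-1) * (r * t) = r * (t ^ (p-1) * t ^ (1:ℝ)) by rw [rpow_one]; ring,
      ← rpow_add ht]
    ring_nf
  rw [mul_assoc, h2, h1]
  nlinarith [mul_lt_mul_of_pos_right hbern htp]

lemma young_le {s t p : ℝ} (hs : 0 ≤ s) (ht : 0 ≤ t) (hp : 1 < p) :
    p * t ^ (p - 1) * s ≤ s ^ p + (p - 1) * t ^ p := by
  rcases eq_or_lt_of_le ht with h | h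
  · rw [← h, zero_rpow (by linarith), zero_rpow (by linarith)]
    simp [rpow_nonneg hs]
  rcases eq_or_ne s t with h' | h'
  · subst h'
    rw [show p * s ^ (p-1) * s = p * (s ^ (p-1) * s ^ (1:ℝ)) by rw [rpow_one]; ring,
      ← rpow_add h]
    ring_nf
    rfl
  · exact (young_aux hs h hp h').le

lemma young_eq {s t p : ℝ} (hs : 0 ≤ s) (ht : 0 ≤ t) (hp : 1 < p)
    (h : s ^ p + (p - 1) * t ^ p - p * t ^ (p - 1) * s = 0) : s = t := by
  rcases eq_or_lt_of_le ht with h0 | h0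
  · rw [← h0] at h ⊢
    rw [zero_rpow (by linarith), zero_rpow (by linarith)] at h
    simp at h
    have : s ^ p = 0 := by linarith
    exact (rpow_eq_zero hs (by linarith)).mp this
  by_contra hne
  have := young_aux hs h0 hp hne
  linarith

lemma absB_mul {B p : ℝ} (hp : 1 < p) : |B| ^ (p - 2) * |B| = |B| ^ (p - 1) := by
  rcases eq_or_ne B 0 with h | h
  · subst h
    simp only [abs_zero, mul_zero]
    rw [zero_rpow (show p - 1 ≠ 0 by intro h; linarith [sub_eq_zero.mp h])]
  · rw [show p - 1 = (p - 2) + 1 by ring, rpow_add (abs_pos.2 h), rpow_one]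

lemma term_decomp {A B w p : ℝ} (hw : 0 ≤ w) (hp : 1 < p) :
    |A| ^ p + (p - 1) * w ^ p * |B| ^ p - p * w ^ (p - 1) * |B| ^ (p - 2) * A * B
    = (|A| ^ p + (p - 1) * (w * |B|) ^ p - p * (w * |B|) ^ (p - 1) * |A|)
      + p * w ^ (p - 1) * (|B| ^ (p - 2) * (|A| * |B|) - |B| ^ (p - 2) * (A * B)) := by
  rw [mul_rpow hw (abs_nonneg B), mul_rpow hw (abs_nonneg B)]
  have h2 : |B| ^ (p - 2) * (|A| * |B|) = |B| ^ (p - 1) * |A| := by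
    rw [show |B| ^ (p-2) * (|A| * |B|) = (|B| ^ (p-2) * |B|) * |A| by ring, absB_mul hp]
  rw [h2]; ring

lemma term1_nonneg {A B w p : ℝ} (hw : 0 ≤ w) (hp : 1 < p) :
    0 ≤ |A| ^ p + (p - 1) * (w * |B|) ^ p - p * (w * |B|) ^ (p - 1) * |A| := by
  have := young_le (abs_nonneg A) (mul_nonneg hw (abs_nonneg B)) hp
  linarith

lemma term2_nonneg {A B w p : ℝ} (hw : 0 ≤ w) (hp : 1 < p) :
    0 ≤ p * w ^ (p - 1) * (|B| ^ (p - 2) * (|A| * |B|) - |B| ^ (p - 2) * (A * B)) := by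
  apply mul_nonneg (mul_nonneg (by linarith) (rpow_nonneg hw _))
  have : A * B ≤ |A| * |B| := by rw [← abs_mul]; exact le_abs_self _
  have hB2 : (0:ℝ) ≤ |B| ^ (p - 2) := rpow_nonneg (abs_nonneg B) _
  nlinarith

lemma picone_term_nonneg {A B w p : ℝ} (hw : 0 ≤ w) (hp : 1 < p) :
    0 ≤ |A| ^ p + (p - 1) * w ^ p * |B| ^ p - p * w ^ (p - 1) * |B| ^ (p - 2) * A * B := by
  rw [term_decomp hw hp]
  exact add_nonneg (term1_nonneg hw hp) (term2_nonneg hw hp)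

lemma picone_term_eq {A B w p : ℝ} (hw : 0 ≤ w) (hp : 1 < p)
    (h : |A| ^ p + (p - 1) * w ^ p * |B| ^ p - p * w ^ (p - 1) * |B| ^ (p - 2) * A * B = 0) :
    A = w * B := by
  rw [term_decomp hw hp] at h
  have e1 : |A| ^ p + (p - 1) * (w * |B|) ^ p - p * (w * |B|) ^ (p - 1) * |A| = 0 := by
    have := term1_nonneg (A := A) (B := B) hw hp
    have := term2_nonneg (A := A) (B := B) hw hp
    linarith
  have e2 : p * w ^ (p - 1) * (|B| ^ (p - 2) * (|A| * |B|) - |B| ^ (p - 2) * (A * B)) = 0 := by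
    have := term1_nonneg (A := A) (B := B) hw hp
    linarith
  have hA : |A| = w * |B| :=
    young_eq (abs_nonneg A) (mul_nonneg hw (abs_nonneg B)) hp e1
  rcases eq_or_lt_of_le hw with hw0 | hw0
  · rw [← hw0] at hA ⊢
    simp at hA ⊢
    exact hA
  rcases eq_or_ne B 0 with hB0 | hB0
  · subst hB0
    simp at hA ⊢
    exact hA
  have hwp : (0:ℝ) < w ^ (p - 1) := rpow_pos_of_pos hw0 _
  have hBp : (0:ℝ) < |B| ^ (p - 2) := rpow_pos_of_pos (abs_pos.2 hB0) _
  have e3 : A * B = |A| * |B| := by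
    have hpw : p * w ^ (p - 1) ≠ 0 := by positivity
    have hX := (mul_eq_zero.mp e2).resolve_left hpw
    have hX' : |B| ^ (p - 2) * (|A| * |B|) = |B| ^ (p - 2) * (A * B) := by linarith
    exact (mul_left_cancel₀ (ne_of_gt hBp) hX').symm
  have h5 : |A| * |B| = w * (B * B) := by rw [hA, mul_assoc, abs_mul_abs_self]
  have h6 : (A - w * B) * B = 0 := by nlinarith
  have := (mul_eq_zero.mp h6).resolve_right hB0
  linarith

lemma myHasDerivAt_update {n : ℕ} (x : Fin n → ℝ) (k : Fin n) :
    HasDerivAt (fun t : ℝ => Function.update x k t) (Pi.single k 1) (x k) := by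
  have h : (fun t : ℝ => Function.update x k t)
      = fun t : ℝ => x + (t - x k) • (Pi.single k 1 : Fin n → ℝ) := by
    funext t
    funext i
    rcases eq_or_ne i k with h | h
    · subst h; simp
    · simp [Function.update_of_ne h, Pi.single_apply, h]
  rw [h]
  have h1 : HasDerivAt (fun t : ℝ => (t - x k)) 1 (x k) :=
    (hasDerivAt_id (x k)).sub_const (x k)
  have h2 := h1.smul_const (Pi.single k 1 : Fin n → ℝ)
  simpa using h2.const_add x

lemma myHasDerivAt_comp_update {n : ℕ} {f : (Fin n → ℝ) → ℝ} {x : Fin n → ℝ}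
    (hf : DifferentiableAt ℝ f x) (k : Fin n) :
    HasDerivAt (fun t : ℝ => f (Function.update x k t))
      (fderiv ℝ f x (Pi.single k 1)) (x k) := by
  have hfd : HasFDerivAt f (fderiv ℝ f x) (Function.update x k (x k)) := by
    rw [Function.update_eq_self]; exact hf.hasFDerivAt
  exact hfd.comp_hasDerivAt (x k) (myHasDerivAt_update x k)

lemma myDeriv_update {n : ℕ} {f : (Fin n → ℝ) → ℝ} {x : Fin n → ℝ}
    (hf : DifferentiableAt ℝ f x) (k : Fin n) :
    deriv (fun t : ℝ => f (Function.update x k t)) (x k)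
      = fderiv ℝ f x (Pi.single k 1) :=
  (myHasDerivAt_comp_update hf k).deriv

lemma pi_eq_sum_single {n : ℕ} (y : Fin n → ℝ) :
    y = ∑ k, y k • (Pi.single k 1 : Fin n → ℝ) := by
  funext i
  rw [Finset.sum_apply]
  simp [Pi.single_apply, mul_ite]

lemma clm_zero_of_basis {n : ℕ} {F : (Fin n → ℝ) →L[ℝ] ℝ}
    (h : ∀ k, F (Pi.single k 1) = 0) : F = 0 := by
  ext y
  rw [ContinuousLinearMap.zero_apply]
  conv_lhs => rw [pi_eq_sum_single y]
  rw [map_sum]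
  apply Finset.sum_eq_zero
  intro k _
  rw [map_smul, h k, smul_zero]

end aux

/-- The conformable partial derivative of order `α` in the `k`-th coordinate:
`D^α_{x_k} f (x) = x_k^{1-α} ∂f/∂x_k (x)`. -/
noncomputable def confPDeriv (α : ℝ) {n : ℕ} (f : (Fin n → ℝ) → ℝ) (k : Fin n)
    (x : Fin n → ℝ) : ℝ :=
  (x k) ^ (1 - α) * deriv (fun t : ℝ => f (Function.update x k t)) (x k)

/-- The second form `L(u,v)` of the anisotropic conformable Picone identity. -/
noncomputable def piconeL (α : ℝ) {n : ℕ} (p : Fin n → ℝ)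
    (u v : (Fin n → ℝ) → ℝ) (x : Fin n → ℝ) : ℝ :=
  (∑ k, |confPDeriv α u k x| ^ (p k))
    + (∑ k, (p k - 1) * (u x / v x) ^ (p k) * |confPDeriv α v k x| ^ (p k))
    - ∑ k, p k * (u x / v x) ^ (p k - 1) * |confPDeriv α v k x| ^ (p k - 2)
        * confPDeriv α u k x * confPDeriv α v k x

/-- Equality case of the anisotropic conformable Picone identity:
if `L(u,v) = 0` on a connected open set `Ω`, then `u = c·v` for a constant `c ≥ 0`. -/
theorem anisotropic_conformable_picone_eq_case (α : ℝ) (hα : α ∈ Set.Ioc (0 : ℝ) 1)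
    (n : ℕ) (Ω : Set (Fin n → ℝ)) (hΩ : IsOpen Ω) (hconn : IsConnected Ω)
    (hΩpos : Ω ⊆ {x : Fin n → ℝ | ∀ k, 0 < x k})
    (p : Fin n → ℝ) (hp : ∀ k, 1 < p k)
    (u v : (Fin n → ℝ) → ℝ)
    (hu : ContDiffOn ℝ 1 u Ω) (hv : ContDiffOn ℝ 1 v Ω)
    (hu0 : ∀ x ∈ Ω, 0 ≤ u x) (hv0 : ∀ x ∈ Ω, 0 < v x)
    (hL : ∀ x ∈ Ω, piconeL α p u v x = 0) :
    ∃ c : ℝ, 0 ≤ c ∧ ∀ x ∈ Ω, u x = c * v x := by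
  set w : (Fin n → ℝ) → ℝ := fun y => u y / v y with hw
  have hud : ∀ x ∈ Ω, DifferentiableAt ℝ u x := fun x hx =>
    ((hu.differentiableOn one_ne_zero) x hx).differentiableAt (hΩ.mem_nhds hx)
  have hvd : ∀ x ∈ Ω, DifferentiableAt ℝ v x := fun x hx =>
    ((hv.differentiableOn one_ne_zero) x hx).differentiableAt (hΩ.mem_nhds hx)
  have hwd : ∀ x ∈ Ω, DifferentiableAt ℝ w x := by
    intro x hx
    rw [hw]
    simp only [div_eq_mul_inv]
    exact (hud x hx).mul ((hvd x hx).inv (ne_of_gt (hv0 x hx)))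
  -- Step A: pointwise equality of partial derivatives
  have stepA : ∀ x ∈ Ω, ∀ k, fderiv ℝ u x (Pi.single k 1)
      = w x * fderiv ℝ v x (Pi.single k 1) := by
    intro x hx k
    have hwnn : 0 ≤ w x := div_nonneg (hu0 x hx) (hv0 x hx).le
    -- each term of the sum is zero
    have hsum : ∑ j, (|confPDeriv α u j x| ^ (p j)
        + (p j - 1) * (w x) ^ (p j) * |confPDeriv α v j x| ^ (p j)
        - p j * (w x) ^ (p j - 1) * |confPDeriv α v j x| ^ (p j - 2)
          * confPDeriv α u j x * confPDeriv α v j x) = 0 := by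
      rw [Finset.sum_sub_distrib, Finset.sum_add_distrib]
      exact hL x hx
    have hterm : ∀ j : Fin n, (|confPDeriv α u j x| ^ (p j)
        + (p j - 1) * (w x) ^ (p j) * |confPDeriv α v j x| ^ (p j)
        - p j * (w x) ^ (p j - 1) * |confPDeriv α v j x| ^ (p j - 2)
          * confPDeriv α u j x * confPDeriv α v j x) = 0 := by
      have hnn : ∀ j ∈ Finset.univ, (0:ℝ) ≤ (|confPDeriv α u j x| ^ (p j)
          + (p j - 1) * (w x) ^ (p j) * |confPDeriv α v j x| ^ (p j)
          - p j * (w x) ^ (p j - 1) * |confPDeriv α v j x| ^ (p j - 2)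
            * confPDeriv α u j x * confPDeriv α v j x) :=
        fun j _ => picone_term_nonneg hwnn (hp j)
      intro j
      exact (Finset.sum_eq_zero_iff_of_nonneg hnn).mp hsum j (Finset.mem_univ j)
    have hcd : confPDeriv α u k x = w x * confPDeriv α v k x :=
      picone_term_eq hwnn (hp k) (hterm k)
    have hm : (0:ℝ) < (x k) ^ (1 - α) := rpow_pos_of_pos (hΩpos hx k) _
    rw [confPDeriv, confPDeriv, myDeriv_update (hud x hx) k,
      myDeriv_update (hvd x hx) k] at hcd
    have : (x k) ^ (1 - α) * fderiv ℝ u x (Pi.single k 1)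
        = (x k) ^ (1 - α) * (w x * fderiv ℝ v x (Pi.single k 1)) := by
      rw [hcd]; ring
    exact mul_left_cancel₀ (ne_of_gt hm) this
  -- Step B: fderiv of w vanishes on Ω
  have stepB : ∀ x ∈ Ω, fderiv ℝ w x = 0 := by
    intro x hx
    apply clm_zero_of_basis
    intro k
    have hu1 : HasDerivAt (fun t : ℝ => u (Function.update x k t))
        (fderiv ℝ u x (Pi.single k 1)) (x k) := myHasDerivAt_comp_update (hud x hx) k
    have hv1 : HasDerivAt (fun t : ℝ => v (Function.update x k t))
        (fderiv ℝ v x (Pi.single k 1)) (x k) := myHasDerivAt_comp_update (hvd x hx) k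
    have hvne : v (Function.update x k (x k)) ≠ 0 := by
      rw [Function.update_eq_self]; exact ne_of_gt (hv0 x hx)
    have hdiv := hu1.div hv1 hvne
    rw [Function.update_eq_self] at hdiv
    have hnum : (fderiv ℝ u x (Pi.single k 1) * v x
        - u x * fderiv ℝ v x (Pi.single k 1)) / v x ^ 2 = 0 := by
      rw [stepA x hx k]
      have hvne' : v x ≠ 0 := ne_of_gt (hv0 x hx)
      field_simp [hw]
      simp [hw, div_mul_cancel₀ _ hvne']
    rw [hnum] at hdiv
    have := myDeriv_update (hwd x hx) k
    rw [show deriv (fun t : ℝ => w (Function.update x k t)) (x k) = 0 from hdiv.deriv] at this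
    exact this.symm
  -- Step C: w is locally constant on Ω
  have hloc : ∀ x ∈ Ω, ∃ ε > 0, Metric.ball x ε ⊆ Ω ∧
      ∀ y ∈ Metric.ball x ε, w y = w x := by
    intro x hx
    obtain ⟨ε, hε, hball⟩ := Metric.isOpen_iff.mp hΩ x hx
    refine ⟨ε, hε, hball, fun y hy => ?_⟩
    have hdiff : DifferentiableOn ℝ w (Metric.ball x ε) := fun z hz =>
      (hwd z (hball hz)).differentiableWithinAt
    have hfz : ∀ z ∈ Metric.ball x ε, fderivWithin ℝ w (Metric.ball x ε) z = 0 := by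
      intro z hz
      rw [fderivWithin_of_isOpen Metric.isOpen_ball hz]
      exact stepB z (hball hz)
    exact (convex_ball x ε).is_const_of_fderivWithin_eq_zero hdiff hfz hy
      (Metric.mem_ball_self hε)
  -- Step D: conclude by connectedness
  obtain ⟨x₀, hx₀⟩ := hconn.nonempty
  refine ⟨w x₀, div_nonneg (hu0 x₀ hx₀) (hv0 x₀ hx₀).le, ?_⟩
  set c := w x₀ with hc
  have hΩU : Ω ⊆ {x | x ∈ Ω ∧ w x = c} := by
    set U : Set (Fin n → ℝ) := {x | x ∈ Ω ∧ w x = c} with hU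
    set V : Set (Fin n → ℝ) := {x | x ∈ Ω ∧ w x ≠ c} with hV
    have hUopen : IsOpen U := by
      rw [Metric.isOpen_iff]
      rintro x ⟨hx, hxc⟩
      obtain ⟨ε, hε, hball, hconst⟩ := hloc x hx
      exact ⟨ε, hε, fun y hy => ⟨hball hy, by rw [hconst y hy, hxc]⟩⟩
    have hVopen : IsOpen V := by
      rw [Metric.isOpen_iff]
      rintro x ⟨hx, hxc⟩
      obtain ⟨ε, hε, hball, hconst⟩ := hloc x hx
      exact ⟨ε, hε, fun y hy => ⟨hball hy, by rw [hconst y hy]; exact hxc⟩⟩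
    have hdisj : Disjoint U V := by
      rw [Set.disjoint_left]
      rintro x ⟨_, hxc⟩ ⟨_, hxc'⟩
      exact hxc' hxc
    have hsub : Ω ⊆ U ∪ V := by
      intro x hx
      by_cases h : w x = c
      · exact Or.inl ⟨hx, h⟩
      · exact Or.inr ⟨hx, h⟩
    have hne : (Ω ∩ U).Nonempty := ⟨x₀, hx₀, hx₀, rfl⟩
    exact hconn.isPreconnected.subset_left_of_subset_union hUopen hVopen hdisj hsub hne
  intro x hx
  have hxc : w x = c := (hΩU hx).2
  have hvne : v x ≠ 0 := ne_of_gt (hv0 x hx)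
  rw [← hxc]
  field_simp [hw]
  simp [hw, div_mul_cancel₀ _ hvne]
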